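/- Let G be a finite simple graph on n vertices with exactly 2n−2 edges and no proper subgraph of minimum degree 3. Then G has no edge uv such that both u and v have degree at least 4 in G. -/

import Mathlib

/-- `G` has a proper (not necessarily induced) subgraph of minimum degree 3:
a nonempty subgraph `H ≠ G` every vertex of which has at least 3 neighbours
within `H`. -/
def HasProperMinDegThreeSubgraph {V : Type} (G : SimpleGraph V) : Prop :=
  ∃ H : G.Subgraph, H ≠ ⊤ ∧ H.verts.Nonempty ∧
    ∀ v ∈ H.verts, 3 ≤ (H.neighborSet v).ncard

open SimpleGraph

/-- Number of edges of `G` with both endpoints in `S`. -/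
private noncomputable def eIn {V : Type} (G : SimpleGraph V) (S : Set V) : ℕ :=
  {e ∈ G.edgeSet | ∀ x ∈ e, x ∈ S}.ncard

private lemma eIn_del {V : Type} [Fintype V] (G : SimpleGraph V) (S : Set V) (w : V) :
    eIn G S ≤ eIn G (S \ {w}) + (S ∩ G.neighborSet w).ncard := by
  have hsub : {e ∈ G.edgeSet | ∀ x ∈ e, x ∈ S} ⊆
      {e ∈ G.edgeSet | ∀ x ∈ e, x ∈ S \ {w}} ∪
      ((fun v => s(w, v)) '' (S ∩ G.neighborSet w)) := by
    rintro e ⟨he, hS⟩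
    by_cases hw : w ∈ e
    · right
      induction e with
      | h a b =>
        rcases Sym2.mem_iff.mp hw with rfl | rfl
        · exact ⟨b, ⟨hS b (Sym2.mem_mk_right _ _), he⟩, rfl⟩
        · exact ⟨a, ⟨hS a (Sym2.mem_mk_left _ _), (G.adj_symm he : G.Adj w a)⟩, Sym2.eq_swap⟩
    · left
      exact ⟨he, fun x hx => ⟨hS x hx, fun h => hw (h ▸ hx)⟩⟩
  calc eIn G S ≤ ({e ∈ G.edgeSet | ∀ x ∈ e, x ∈ S \ {w}} ∪
        ((fun v => s(w, v)) '' (S ∩ G.neighborSet w))).ncard :=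
        Set.ncard_le_ncard hsub ((Set.toFinite _).union (Set.toFinite _))
    _ ≤ eIn G (S \ {w}) + ((fun v => s(w, v)) '' (S ∩ G.neighborSet w)).ncard :=
        Set.ncard_union_le _ _
    _ ≤ eIn G (S \ {w}) + (S ∩ G.neighborSet w).ncard := by
        gcongr
        exact Set.ncard_image_le (Set.toFinite _)

private lemma eIn_max {V : Type} [Fintype V] (G : SimpleGraph V) :
    ∀ n (S : Set V), S.ncard = n → 2 * eIn G S ≤ n * (n - 1) := by
  intro n
  induction n with
  | zero =>
    intro S hS
    have hSe : S = ∅ := (Set.ncard_eq_zero (Set.toFinite _)).mp hS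
    subst hSe
    have : {e ∈ G.edgeSet | ∀ x ∈ e, x ∈ (∅ : Set V)} = ∅ := by
      ext e
      simp only [Set.mem_setOf_eq, Set.mem_empty_iff_false, iff_false, not_and]
      intro _ h
      induction e with
      | h a b => exact h a (Sym2.mem_mk_left _ _)
    have h0 : eIn G (∅ : Set V) = 0 := by rw [eIn, this]; exact Set.ncard_empty _
    omega
  | succ n ih =>
    intro S hS
    have hne : S.Nonempty := by
      rw [← Set.ncard_pos (Set.toFinite _)] at *
      omega
    obtain ⟨w, hw⟩ := hne
    have h1 : (S \ {w}).ncard = n := by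
      rw [Set.ncard_diff_singleton_of_mem hw]; omega
    have h2 : (S ∩ G.neighborSet w).ncard ≤ n := by
      have : S ∩ G.neighborSet w ⊆ S \ {w} := by
        rintro x ⟨hxS, hxn⟩
        exact ⟨hxS, fun h => G.irrefl (h ▸ hxn : G.Adj w w)⟩
      calc (S ∩ G.neighborSet w).ncard ≤ (S \ {w}).ncard :=
            Set.ncard_le_ncard this (Set.toFinite _)
        _ = n := h1
    have h3 := eIn_del G S w
    have h4 := ih (S \ {w}) h1
    have hmul : (n + 1) * (n + 1 - 1) = n * (n - 1) + 2 * n := by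
      cases n with
      | zero => rfl
      | succ m => simp only [Nat.succ_sub_one]; ring
    omega

private lemma exists_T {V : Type} [Fintype V] (G : SimpleGraph V) :
    ∀ n (S : Set V), S.ncard = n → 2 ≤ n → 2 * n - 2 ≤ eIn G S →
      ∃ T, T ⊆ S ∧ T.Nonempty ∧ ∀ v ∈ T, 3 ≤ (T ∩ G.neighborSet v).ncard := by
  intro n
  induction n using Nat.strong_induction_on with
  | _ n ih =>
    intro S hS hn he
    by_cases hall : ∀ v ∈ S, 3 ≤ (S ∩ G.neighborSet v).ncard
    · refine ⟨S, subset_rfl, ?_, hall⟩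
      rw [← Set.ncard_pos (Set.toFinite _)]
      omega
    · push_neg at hall
      obtain ⟨w, hwS, hw⟩ := hall
      have hn4 : 4 ≤ n := by
        by_contra h
        have := eIn_max G n S hS
        interval_cases n <;> omega
      have h1 : (S \ {w}).ncard = n - 1 := by
        rw [Set.ncard_diff_singleton_of_mem hwS]; omega
      have h2 : 2 * (n - 1) - 2 ≤ eIn G (S \ {w}) := by
        have := eIn_del G S w
        omega
      obtain ⟨T, hTS, hTne, hT⟩ := ih (n - 1) (by omega) (S \ {w}) h1 (by omega) h2
      exact ⟨T, hTS.trans Set.diff_subset, hTne, hT⟩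

/-- Let `G` be a finite simple graph on `n` vertices with
exactly `2n − 2` edges and no proper subgraph of minimum degree 3.  Then `G`
has no edge `uv` such that both `u` and `v` have degree at least 4 in `G`. -/
theorem no_adjacent_degree_four_vertices {V : Type} [Fintype V]
    (G : SimpleGraph V)
    (he : G.edgeSet.ncard = 2 * Fintype.card V - 2)
    (hG : ¬ HasProperMinDegThreeSubgraph G) :
    ¬ ∃ u v : V, G.Adj u v ∧
      4 ≤ (G.neighborSet u).ncard ∧ 4 ≤ (G.neighborSet v).ncard := by
  rintro ⟨u, v, huv, hu, hv⟩
  apply hG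
  by_cases hsmall : ∃ w : V, (G.neighborSet w).ncard ≤ 2
  · -- some vertex of low degree: get a proper induced subgraph of min degree 3
    obtain ⟨w, hw⟩ := hsmall
    have hcard : 2 ≤ Fintype.card V := by
      exact Fintype.one_lt_card_iff.mpr ⟨u, v, huv.ne⟩
    have heIn : 2 * Fintype.card V - 2 ≤ eIn G Set.univ := by
      have : {e ∈ G.edgeSet | ∀ x ∈ e, x ∈ (Set.univ : Set V)} = G.edgeSet := by
        ext e; simp
      rw [eIn, this, he]
    obtain ⟨T, _, hTne, hT⟩ := exists_T G (Fintype.card V) Set.univ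
      (by simp [Set.ncard_univ]) hcard heIn
    have hwT : w ∉ T := by
      intro hwT
      have := hT w hwT
      have h2 : (T ∩ G.neighborSet w).ncard ≤ (G.neighborSet w).ncard :=
        Set.ncard_le_ncard Set.inter_subset_right (Set.toFinite _)
      omega
    refine ⟨(⊤ : G.Subgraph).induce T, ?_, by simpa using hTne, ?_⟩
    · intro h
      have : ((⊤ : G.Subgraph).induce T).verts = (⊤ : G.Subgraph).verts := by rw [h]
      rw [Subgraph.induce_verts, Subgraph.verts_top] at this
      exact hwT (this ▸ Set.mem_univ w)
    · intro x hx
      rw [Subgraph.induce_verts] at hx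
      have hsub : T ∩ G.neighborSet x ⊆ ((⊤ : G.Subgraph).induce T).neighborSet x := by
        rintro y ⟨hyT, hyn⟩
        show ((⊤ : G.Subgraph).induce T).Adj x y
        rw [Subgraph.induce_adj]
        exact ⟨hx, hyT, Subgraph.top_adj.mpr hyn⟩
      calc 3 ≤ (T ∩ G.neighborSet x).ncard := hT x hx
        _ ≤ _ := Set.ncard_le_ncard hsub (Set.toFinite _)
  · -- all degrees ≥ 3: delete the edge uv
    push_neg at hsmall
    refine ⟨(⊤ : G.Subgraph).deleteEdges {s(u, v)}, ?_, ?_, ?_⟩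
    · intro h
      have : ((⊤ : G.Subgraph).deleteEdges {s(u, v)}).Adj u v := by
        rw [h]; exact Subgraph.top_adj.mpr huv
      rw [Subgraph.deleteEdges_adj] at this
      exact this.2 rfl
    · rw [Subgraph.deleteEdges_verts, Subgraph.verts_top]
      exact ⟨u, Set.mem_univ u⟩
    · intro x _
      have hkey : ∀ y, G.Adj x y → y ∉ ({u, v} : Set V) →
          ((⊤ : G.Subgraph).deleteEdges {s(u, v)}).Adj x y := by
        intro y hxy hy
        rw [Subgraph.deleteEdges_adj]
        refine ⟨Subgraph.top_adj.mpr hxy, ?_⟩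
        intro hmem
        rw [Set.mem_singleton_iff, Sym2.eq_iff] at hmem
        rcases hmem with ⟨_, h2⟩ | ⟨_, h2⟩
        · exact hy (by simp [h2])
        · exact hy (by simp [h2])
      by_cases hxu : x = u
      · subst hxu
        have hsub : G.neighborSet x \ {v} ⊆
            ((⊤ : G.Subgraph).deleteEdges {s(x, v)}).neighborSet x := by
          rintro y ⟨hyn, hyv⟩
          show ((⊤ : G.Subgraph).deleteEdges _).Adj x y
          rw [Subgraph.deleteEdges_adj]
          refine ⟨Subgraph.top_adj.mpr hyn, ?_⟩
          intro hmem
          rw [Set.mem_singleton_iff, Sym2.eq_iff] at hmem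
          rcases hmem with ⟨_, h2⟩ | ⟨_, h2⟩
          · exact hyv (Set.mem_singleton_iff.mpr h2)
          · exact G.irrefl (h2 ▸ hyn)
        have : (G.neighborSet x \ {v}).ncard = (G.neighborSet x).ncard - 1 :=
          Set.ncard_diff_singleton_of_mem huv
        have h2 : (G.neighborSet x \ {v}).ncard ≤
            (((⊤ : G.Subgraph).deleteEdges {s(x, v)}).neighborSet x).ncard :=
          Set.ncard_le_ncard hsub (Set.toFinite _)
        omega
      · by_cases hxv : x = v
        · subst hxv
          have hsub : G.neighborSet x \ {u} ⊆
              ((⊤ : G.Subgraph).deleteEdges {s(u, x)}).neighborSet x := by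
            rintro y ⟨hyn, hyu⟩
            show ((⊤ : G.Subgraph).deleteEdges _).Adj x y
            rw [Subgraph.deleteEdges_adj]
            refine ⟨Subgraph.top_adj.mpr hyn, ?_⟩
            intro hmem
            rw [Set.mem_singleton_iff, Sym2.eq_iff] at hmem
            rcases hmem with ⟨h1, h2⟩ | ⟨_, h2⟩
            · exact G.irrefl (h2 ▸ hyn)
            · exact hyu (Set.mem_singleton_iff.mpr h2)
          have : (G.neighborSet x \ {u}).ncard = (G.neighborSet x).ncard - 1 :=
            Set.ncard_diff_singleton_of_mem huv.symm
          have h2 : (G.neighborSet x \ {u}).ncard ≤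
              (((⊤ : G.Subgraph).deleteEdges {s(u, x)}).neighborSet x).ncard :=
            Set.ncard_le_ncard hsub (Set.toFinite _)
          omega
        · have hsub : G.neighborSet x ⊆
              ((⊤ : G.Subgraph).deleteEdges {s(u, v)}).neighborSet x := by
            intro y hyn
            by_cases hyuv : y ∈ ({u, v} : Set V)
            · show ((⊤ : G.Subgraph).deleteEdges _).Adj x y
              rw [Subgraph.deleteEdges_adj]
              refine ⟨Subgraph.top_adj.mpr hyn, ?_⟩
              intro hmem
              rw [Set.mem_singleton_iff, Sym2.eq_iff] at hmem
              rcases hmem with ⟨h1, _⟩ | ⟨h1, _⟩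
              · exact hxu h1
              · exact hxv h1
            · exact hkey y hyn hyuv
          have := hsmall x
          have h2 : (G.neighborSet x).ncard ≤
              (((⊤ : G.Subgraph).deleteEdges {s(u, v)}).neighborSet x).ncard :=
            Set.ncard_le_ncard hsub (Set.toFinite _)
          omega
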